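/- Assume a function F ∈ C(ℝ²) has the form F(x,y) = g(x+y) − g(x) − g(y), where g : ℝ → ℝ is an arbitrary function. Then for every rational δ ∈ (0, 1/2) and every real M ≥ 1 the following inequality holds: ω_ℚ(g; δ; [−M,M]) ≤ 2δ·|g(1) − g(0)| + 3·ω(F; δ; [−M,M]²). -/

import Mathlib

/-- Modulus of continuity of `f : ℝ → ℝ` on `Ω` with increment `δ`. -/
noncomputable def omega1 (f : ℝ → ℝ) (δ : ℝ) (Ω : Set ℝ) : ℝ :=
  sSup {d : ℝ | ∃ x ∈ Ω, ∃ y ∈ Ω, |x - y| ≤ δ ∧ d = |f x - f y|}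

/-- Modulus of continuity of `F : ℝ² → ℝ` on `Ω` with increment `δ`
(Euclidean distance on `ℝ²`). -/
noncomputable def omega2 (F : ℝ × ℝ → ℝ) (δ : ℝ) (Ω : Set (ℝ × ℝ)) : ℝ :=
  sSup {d : ℝ | ∃ p ∈ Ω, ∃ q ∈ Ω,
    Real.sqrt ((p.1 - q.1) ^ 2 + (p.2 - q.2) ^ 2) ≤ δ ∧ d = |F p - F q|}

set_option maxHeartbeats 1000000 in
/-- If `F(x,y) = g(x+y) - g(x) - g(y)` is continuous on `ℝ²`, then for every
rational `δ ∈ (0, 1/2)` and every `M ≥ 1`,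
`ω_ℚ(g; δ; [-M,M]) ≤ 2δ|g(1) - g(0)| + 3 ω(F; δ; [-M,M]²)`. -/
theorem stmt_2 (g : ℝ → ℝ)
    (hF : Continuous (fun p : ℝ × ℝ => g (p.1 + p.2) - g p.1 - g p.2))
    (δ : ℚ) (hδ0 : 0 < δ) (hδ : (δ : ℝ) < 1 / 2) (M : ℝ) (hM : 1 ≤ M) :
    omega1 g (δ : ℝ) (Set.Icc (-M) M ∩ Set.range ((↑) : ℚ → ℝ))
      ≤ 2 * (δ : ℝ) * |g 1 - g 0|
        + 3 * omega2 (fun p : ℝ × ℝ => g (p.1 + p.2) - g p.1 - g p.2) (δ : ℝ)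
            (Set.Icc (-M) M ×ˢ Set.Icc (-M) M) := by
  have hδ0' : (0:ℝ) < (δ:ℚ) := by exact_mod_cast hδ0
  have hδM : (δ:ℝ) ≤ M := by linarith
  set F : ℝ × ℝ → ℝ := fun p : ℝ × ℝ => g (p.1 + p.2) - g p.1 - g p.2 with hFdef
  set K : Set (ℝ × ℝ) := Set.Icc (-M) M ×ˢ Set.Icc (-M) M with hKdef
  have hKc : IsCompact K := (isCompact_Icc).prod isCompact_Icc
  obtain ⟨C, hC⟩ := hKc.exists_bound_of_continuousOn hF.continuousOn
  -- boundedness of the omega2 set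
  have hbdd : BddAbove {d : ℝ | ∃ p ∈ K, ∃ q ∈ K,
      Real.sqrt ((p.1 - q.1) ^ 2 + (p.2 - q.2) ^ 2) ≤ (δ:ℝ) ∧ d = |F p - F q|} := by
    refine ⟨2 * C, ?_⟩
    rintro d ⟨p, hp, q, hq, -, rfl⟩
    have h1 := hC p hp
    have h2 := hC q hq
    simp only [Real.norm_eq_abs] at h1 h2
    calc |F p - F q| ≤ |F p| + |F q| := abs_sub _ _
      _ ≤ 2 * C := by linarith
  set ω := omega2 F (δ:ℝ) K with hωdef
  have key : ∀ p ∈ K, ∀ q ∈ K,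
      Real.sqrt ((p.1 - q.1) ^ 2 + (p.2 - q.2) ^ 2) ≤ (δ:ℝ) → |F p - F q| ≤ ω := by
    intro p hp q hq hd
    exact le_csSup hbdd ⟨p, hp, q, hq, hd, rfl⟩
  have h0M : (0:ℝ) ∈ Set.Icc (-M) M := by constructor <;> linarith
  have h00K : ((0:ℝ), (0:ℝ)) ∈ K := ⟨h0M, h0M⟩
  have hω0 : 0 ≤ ω := by
    have := key ((0:ℝ),(0:ℝ)) h00K ((0:ℝ),(0:ℝ)) h00K (by
      simp [Real.sqrt_eq_zero']; positivity)
    simpa using this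
  have habs1 : 0 ≤ |g 1 - g 0| := abs_nonneg _
  have hRHS0 : 0 ≤ 2 * (δ:ℝ) * |g 1 - g 0| + 3 * ω := by positivity
  -- the main estimate for rationals a ≥ b
  have main : ∀ a b : ℚ, (a:ℝ) ∈ Set.Icc (-M) M → (b:ℝ) ∈ Set.Icc (-M) M →
      (b:ℝ) ≤ (a:ℝ) → (a:ℝ) - (b:ℝ) ≤ (δ:ℝ) →
      |g a - g b| ≤ 2 * (δ:ℝ) * |g 1 - g 0| + 3 * ω := by
    intro a b haM hbM hba habδ
    set r : ℚ := a - b with hrdef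
    have hrcast : (r:ℝ) = (a:ℝ) - (b:ℝ) := by push_cast [hrdef]; ring
    have hr0 : (0:ℝ) ≤ (r:ℝ) := by rw [hrcast]; linarith
    have hrδ : (r:ℝ) ≤ (δ:ℝ) := by rw [hrcast]; linarith
    rcases eq_or_lt_of_le hr0 with hr0' | hr0'
    · have hab : (a:ℝ) = (b:ℝ) := by rw [hrcast] at hr0'; linarith
      rw [hab]
      simpa using hRHS0
    -- now 0 < r
    have hrQ : 0 < r := by exact_mod_cast hr0'
    set p : ℕ := r.num.toNat with hpdef
    set q : ℕ := r.den with hqdef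
    have hnum : 0 < r.num := Rat.num_pos.mpr hrQ
    have hppos : 0 < p := by rw [hpdef]; omega
    have hqpos : 0 < q := r.pos
    have hq0 : (0:ℝ) < (q:ℝ) := by exact_mod_cast hqpos
    have hpcast : ((p:ℕ):ℝ) = ((r.num:ℤ):ℝ) := by
      rw [hpdef]; exact_mod_cast Int.toNat_of_nonneg hnum.le
    set s : ℝ := ((q:ℕ):ℝ)⁻¹ with hsdef
    have hs0 : 0 < s := by positivity
    have hqs : (q:ℝ) * s = 1 := mul_inv_cancel₀ (ne_of_gt hq0)
    have hps : (p:ℝ) * s = (r:ℝ) := by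
      rw [hpcast, hsdef]
      rw [Rat.cast_def]
      rw [hqdef]
      ring
    -- p = r * q as reals
    have hpq : (p:ℝ) = (r:ℝ) * (q:ℝ) := by
      have := hps
      field_simp [hsdef] at this
      rw [← hps, mul_assoc, mul_comm s, hqs, mul_one]
    set f : ℕ → ℝ := fun n => g ((n:ℝ) * s) with hfdef
    set E1 : ℝ := ∑ j ∈ Finset.range q, (F ((j:ℝ) * s, (r:ℝ)) - F ((j:ℝ) * s, 0)) with hE1def
    set E2 : ℝ := ∑ k ∈ Finset.range p, (F (1, (k:ℝ) * s) - F (1, 0)) with hE2def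
    -- identity 1
    have id1 : (q:ℝ) * (g r - g 0) + E1
        = ∑ j ∈ Finset.range q, (f (p + j) - f j) := by
      have hterm : ∀ j ∈ Finset.range q,
          (g r - g 0) + (F ((j:ℝ) * s, (r:ℝ)) - F ((j:ℝ) * s, 0)) = f (p + j) - f j := by
        intro j _
        have hc : ((p + j : ℕ):ℝ) * s = (j:ℝ) * s + (r:ℝ) := by
          push_cast
          rw [add_mul, hps]; ring
        simp only [hfdef, hFdef, hc]
        ring
      calc (q:ℝ) * (g r - g 0) + E1
          = ∑ j ∈ Finset.range q,
              ((g r - g 0) + (F ((j:ℝ) * s, (r:ℝ)) - F ((j:ℝ) * s, 0))) := by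
            rw [Finset.sum_add_distrib, Finset.sum_const, Finset.card_range,
              nsmul_eq_mul, hE1def]
        _ = ∑ j ∈ Finset.range q, (f (p + j) - f j) := Finset.sum_congr rfl hterm
    -- identity 2
    have id2 : (p:ℝ) * (g 1 - g 0) + E2
        = ∑ k ∈ Finset.range p, (f (q + k) - f k) := by
      have hterm : ∀ k ∈ Finset.range p,
          (g 1 - g 0) + (F (1, (k:ℝ) * s) - F (1, 0)) = f (q + k) - f k := by
        intro k _
        have hc : ((q + k : ℕ):ℝ) * s = 1 + (k:ℝ) * s := by
          push_cast
          rw [add_mul, hqs]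
        simp only [hfdef, hFdef, hc]
        ring
      calc (p:ℝ) * (g 1 - g 0) + E2
          = ∑ k ∈ Finset.range p,
              ((g 1 - g 0) + (F (1, (k:ℝ) * s) - F (1, 0))) := by
            rw [Finset.sum_add_distrib, Finset.sum_const, Finset.card_range,
              nsmul_eq_mul, hE2def]
        _ = ∑ k ∈ Finset.range p, (f (q + k) - f k) := Finset.sum_congr rfl hterm
    -- the two sums are equal
    have sumid : ∑ j ∈ Finset.range q, (f (p + j) - f j)
        = ∑ k ∈ Finset.range p, (f (q + k) - f k) := by
      have A := Finset.sum_range_add f p q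
      have B := Finset.sum_range_add f q p
      rw [Finset.sum_sub_distrib, Finset.sum_sub_distrib]
      have hcomm : p + q = q + p := Nat.add_comm p q
      rw [hcomm] at A
      linarith
    have mainid : (q:ℝ) * (g r - g 0) = (p:ℝ) * (g 1 - g 0) + E2 - E1 := by
      linarith [id1, id2, sumid]
    -- bounds on E1, E2
    have hE1 : |E1| ≤ (q:ℝ) * ω := by
      calc |E1| ≤ ∑ j ∈ Finset.range q, |F ((j:ℝ) * s, (r:ℝ)) - F ((j:ℝ) * s, 0)| :=
            Finset.abs_sum_le_sum_abs _ _
        _ ≤ ∑ _j ∈ Finset.range q, ω := by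
            apply Finset.sum_le_sum
            intro j hj
            have hj' : (j:ℝ) < (q:ℝ) := by exact_mod_cast Finset.mem_range.mp hj
            have hjs0 : 0 ≤ (j:ℝ) * s := by positivity
            have hjs1 : (j:ℝ) * s ≤ 1 := by
              rw [← hqs]
              apply mul_le_mul_of_nonneg_right hj'.le hs0.le
            have hjsM : ((j:ℝ) * s) ∈ Set.Icc (-M) M := ⟨by linarith, by linarith⟩
            have hrM : (r:ℝ) ∈ Set.Icc (-M) M := ⟨by linarith, by linarith⟩
            apply key ((j:ℝ) * s, (r:ℝ)) ⟨hjsM, hrM⟩ ((j:ℝ) * s, 0) ⟨hjsM, h0M⟩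
            simp only [sub_self, sub_zero]
            rw [show (0:ℝ)^2 + (r:ℝ)^2 = (r:ℝ)^2 by ring, Real.sqrt_sq hr0]
            exact hrδ
        _ = (q:ℝ) * ω := by rw [Finset.sum_const, Finset.card_range, nsmul_eq_mul]
    have h1M : (1:ℝ) ∈ Set.Icc (-M) M := ⟨by linarith, by linarith⟩
    have hE2 : |E2| ≤ (p:ℝ) * ω := by
      calc |E2| ≤ ∑ k ∈ Finset.range p, |F (1, (k:ℝ) * s) - F (1, 0)| :=
            Finset.abs_sum_le_sum_abs _ _
        _ ≤ ∑ _k ∈ Finset.range p, ω := by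
            apply Finset.sum_le_sum
            intro k hk
            have hk' : (k:ℝ) < (p:ℝ) := by exact_mod_cast Finset.mem_range.mp hk
            have hks0 : 0 ≤ (k:ℝ) * s := by positivity
            have hksr : (k:ℝ) * s ≤ (r:ℝ) := by
              rw [← hps]
              apply mul_le_mul_of_nonneg_right hk'.le hs0.le
            have hksM : ((k:ℝ) * s) ∈ Set.Icc (-M) M := ⟨by linarith, by linarith⟩
            apply key (1, (k:ℝ) * s) ⟨h1M, hksM⟩ (1, 0) ⟨h1M, h0M⟩
            simp only [sub_self, sub_zero]
            rw [show (0:ℝ)^2 + ((k:ℝ)*s)^2 = ((k:ℝ)*s)^2 by ring, Real.sqrt_sq hks0]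
            linarith
        _ = (p:ℝ) * ω := by rw [Finset.sum_const, Finset.card_range, nsmul_eq_mul]
    -- consequence: q * |g r - g 0| ≤ p * |g 1 - g 0| + (p + q) * ω
    have hstep1 : (q:ℝ) * |g r - g 0| ≤ (p:ℝ) * |g 1 - g 0| + ((p:ℝ) + (q:ℝ)) * ω := by
      have h1 : (q:ℝ) * |g r - g 0| = |(q:ℝ) * (g r - g 0)| := by
        rw [abs_mul, abs_of_pos hq0]
      rw [h1, mainid]
      calc |(p:ℝ) * (g 1 - g 0) + E2 - E1|
          ≤ |(p:ℝ) * (g 1 - g 0)| + |E2| + |E1| := by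
            apply (abs_sub _ _).trans
            have := abs_add_le ((p:ℝ) * (g 1 - g 0)) E2
            linarith
        _ ≤ (p:ℝ) * |g 1 - g 0| + (p:ℝ) * ω + (q:ℝ) * ω := by
            rw [abs_mul, abs_of_nonneg (by positivity : (0:ℝ) ≤ (p:ℝ))]
            linarith
        _ = (p:ℝ) * |g 1 - g 0| + ((p:ℝ) + (q:ℝ)) * ω := by ring
    -- |g a - g b| ≤ ω + |g r - g 0|
    have hrM : (r:ℝ) ∈ Set.Icc (-M) M := ⟨by linarith, by linarith⟩
    have hFb : |F ((b:ℝ), (r:ℝ)) - F ((b:ℝ), 0)| ≤ ω := by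
      apply key ((b:ℝ), (r:ℝ)) ⟨hbM, hrM⟩ ((b:ℝ), 0) ⟨hbM, h0M⟩
      simp only [sub_self, sub_zero]
      rw [show (0:ℝ)^2 + (r:ℝ)^2 = (r:ℝ)^2 by ring, Real.sqrt_sq hr0]
      exact hrδ
    have hgab : |g a - g b| ≤ ω + |g r - g 0| := by
      have hdecomp : g a - g b = (F ((b:ℝ), (r:ℝ)) - F ((b:ℝ), 0)) + (g r - g 0) := by
        have hab : (a:ℝ) = (b:ℝ) + (r:ℝ) := by rw [hrcast]; ring
        simp only [hFdef]
        rw [hab]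
        ring_nf
      rw [hdecomp]
      calc |(F ((b:ℝ), (r:ℝ)) - F ((b:ℝ), 0)) + (g r - g 0)|
          ≤ |F ((b:ℝ), (r:ℝ)) - F ((b:ℝ), 0)| + |g r - g 0| := abs_add_le _ _
        _ ≤ ω + |g r - g 0| := by linarith
    -- finish by multiplying through by q
    have hgr0 : 0 ≤ |g r - g 0| := abs_nonneg _
    have hfinal : (q:ℝ) * |g a - g b| ≤ (q:ℝ) * (2 * (δ:ℝ) * |g 1 - g 0| + 3 * ω) := by
      have h2 : (p:ℝ) ≤ (δ:ℝ) * (q:ℝ) := by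
        rw [hpq]
        exact mul_le_mul_of_nonneg_right hrδ hq0.le
      have h3 : (q:ℝ) * |g a - g b| ≤ (q:ℝ) * ω + (q:ℝ) * |g r - g 0| := by
        have h3' := mul_le_mul_of_nonneg_left hgab hq0.le
        rw [mul_add] at h3'
        exact h3'
      have h4 : (p:ℝ) * |g 1 - g 0| ≤ (δ:ℝ) * (q:ℝ) * |g 1 - g 0| :=
        mul_le_mul_of_nonneg_right h2 habs1
      have h5 : ((p:ℝ) + (q:ℝ)) * ω ≤ ((δ:ℝ) * (q:ℝ) + (q:ℝ)) * ω := by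
        apply mul_le_mul_of_nonneg_right _ hω0
        linarith
      have e1 : 0 ≤ (δ:ℝ) * ((q:ℝ) * |g 1 - g 0|) :=
        mul_nonneg hδ0'.le (mul_nonneg hq0.le habs1)
      have e2 : 0 ≤ (q:ℝ) * ω := mul_nonneg hq0.le hω0
      have e3 : (δ:ℝ) * ((q:ℝ) * ω) ≤ (q:ℝ) * ω :=
        mul_le_of_le_one_left e2 (by linarith)
      linarith [h3, hstep1, h4, h5, e1, e2, e3]
    exact le_of_mul_le_mul_left hfinal hq0
  -- conclude
  rw [omega1]
  apply Real.sSup_le _ hRHS0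
  rintro d ⟨x, ⟨hxI, a, rfl⟩, y, ⟨hyI, b, rfl⟩, hxy, rfl⟩
  rcases le_total (b:ℝ) (a:ℝ) with hba | hab
  · apply main a b hxI hyI hba
    rw [abs_le] at hxy
    linarith [hxy.2]
  · rw [abs_sub_comm]
    apply main b a hyI hxI hab
    rw [abs_le] at hxy
    linarith [hxy.1]
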